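/- Let λ ≥ 2 be an integer, let 0.9 < a < b < ∞, let 0 < h₀ < a/2, and let f : ℝ → ℝ be any function. Put β₀ = ∑_{j=1}^{λ} binom(λ, j)·((λ−1)h₀)^{j}·b^{λ−j}. If β₀ < min(1 − {a^λ}, 1 − {b^λ}), then (1/h₀^{λ−1}) ∫₀^{h₀} ⋯ ∫₀^{h₀} ( ∑_{n : a+h < n^{1/λ} ≤ b+h} d_λ(n) f(n) ) dh₁⋯dh_{λ−1} = ∑_{n : a < n^{1/λ} ≤ b} d_λ(n) f(n), where h = h₁ + ⋯ + h_{λ−1} and the integration is over (h₁, …, h_{λ−1}) ∈ [0, h₀]^{λ−1}. -/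

import Mathlib

open MeasureTheory
open scoped Real

/-- `dfold λ n` is the number of ordered `λ`-tuples of positive integers whose product is `n`. -/
noncomputable def dfold (lam n : ℕ) : ℕ :=
  ((Fintype.piFinset fun _ : Fin lam => Finset.Icc 1 n).filter fun f => ∏ i, f i = n).card

lemma floor_stable (lam : ℕ) (x b h₀ t : ℝ) (hx : 0 < x) (hxb : x ≤ b)
    (ht0 : 0 ≤ t) (ht : t ≤ ((lam : ℝ) - 1) * h₀)
    (hβ : ∑ j ∈ Finset.Icc 1 lam,
        (lam.choose j : ℝ) * (((lam : ℝ) - 1) * h₀) ^ j * b ^ (lam - j)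
      < 1 - Int.fract (x ^ lam)) :
    ⌊(x + t) ^ lam⌋₊ = ⌊x ^ lam⌋₊ := by
  have hx0 : (0:ℝ) ≤ x := hx.le
  have hxt : (0:ℝ) ≤ x + t := by linarith
  have hpow : x ^ lam ≤ (x + t) ^ lam := by
    apply pow_le_pow_left₀ hx0; linarith
  have hnn : (0:ℝ) ≤ (x + t) ^ lam := pow_nonneg hxt _
  rw [Nat.floor_eq_iff hnn]
  refine ⟨le_trans (Nat.floor_le (pow_nonneg hx0 _)) hpow, ?_⟩
  have hexp : (x + t) ^ lam = x ^ lam +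
      ∑ j ∈ Finset.Icc 1 lam, t ^ j * x ^ (lam - j) * (lam.choose j : ℝ) := by
    rw [add_comm x t, add_pow]
    have : Finset.range (lam + 1) = insert 0 (Finset.Icc 1 lam) := by
      ext k; simp; omega
    rw [this, Finset.sum_insert (by simp)]
    simp
  have hbound : ∑ j ∈ Finset.Icc 1 lam, t ^ j * x ^ (lam - j) * (lam.choose j : ℝ)
      ≤ ∑ j ∈ Finset.Icc 1 lam,
        (lam.choose j : ℝ) * (((lam : ℝ) - 1) * h₀) ^ j * b ^ (lam - j) := by
    apply Finset.sum_le_sum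
    intro j hj
    have h1 : t ^ j ≤ (((lam : ℝ) - 1) * h₀) ^ j := pow_le_pow_left₀ ht0 ht j
    have h2 : x ^ (lam - j) ≤ b ^ (lam - j) := pow_le_pow_left₀ hx0 hxb _
    have hc : (0:ℝ) ≤ (lam.choose j : ℝ) := by positivity
    calc t ^ j * x ^ (lam - j) * (lam.choose j : ℝ)
        ≤ (((lam : ℝ) - 1) * h₀) ^ j * b ^ (lam - j) * (lam.choose j : ℝ) := by
          apply mul_le_mul_of_nonneg_right _ hc
          exact mul_le_mul h1 h2 (pow_nonneg hx0 _) (pow_nonneg (by linarith) _)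
      _ = (lam.choose j : ℝ) * (((lam : ℝ) - 1) * h₀) ^ j * b ^ (lam - j) := by ring
  have hfl : ((⌊x ^ lam⌋₊ : ℝ)) = (⌊x ^ lam⌋ : ℝ) := by
    exact_mod_cast congrArg Int.cast (Int.natCast_floor_eq_floor (pow_nonneg hx0 _))
  have hfract : Int.fract (x ^ lam) = x ^ lam - ⌊x ^ lam⌋ := rfl
  rw [hexp, hfl]
  have := Int.fract_nonneg (x ^ lam)
  linarith [hβ, hbound]


/-- Lemma 2.1: if `h₀` is small enough (in terms of the fractional parts of `a^λ` and `b^λ`),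
then the averaged sum `S_λ` equals the plain sum `∑_{a < n^{1/λ} ≤ b} d_λ(n) f(n)`.
The condition `a + h < n^{1/λ} ≤ b + h` is expressed as `(a+h)^λ < n ≤ (b+h)^λ`. -/
theorem stmt2 (lam : ℕ) (hlam : 2 ≤ lam) (a b h₀ : ℝ) (f : ℝ → ℝ)
    (ha : 0.9 < a) (hab : a < b) (hh₀ : 0 < h₀) (hh₀' : h₀ < a / 2)
    (hβ : ∑ j ∈ Finset.Icc 1 lam,
        (lam.choose j : ℝ) * (((lam : ℝ) - 1) * h₀) ^ j * b ^ (lam - j)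
      < min (1 - Int.fract (a ^ lam)) (1 - Int.fract (b ^ lam))) :
    (1 / h₀ ^ (lam - 1)) *
        ∫ h in Set.Icc (0 : Fin (lam - 1) → ℝ) (fun _ => h₀),
          ∑ n ∈ Finset.Ioc ⌊(a + ∑ i, h i) ^ lam⌋₊ ⌊(b + ∑ i, h i) ^ lam⌋₊,
            (dfold lam n : ℝ) * f n
      = ∑ n ∈ Finset.Ioc ⌊a ^ lam⌋₊ ⌊b ^ lam⌋₊, (dfold lam n : ℝ) * f n := by
  have ha0 : (0:ℝ) < a := by norm_num at ha ⊢; linarith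
  have hb0 : (0:ℝ) < b := lt_trans ha0 hab
  set c : ℝ := ∑ n ∈ Finset.Ioc ⌊a ^ lam⌋₊ ⌊b ^ lam⌋₊, (dfold lam n : ℝ) * f n with hc
  have heqon : Set.EqOn
      (fun h : Fin (lam - 1) → ℝ =>
        ∑ n ∈ Finset.Ioc ⌊(a + ∑ i, h i) ^ lam⌋₊ ⌊(b + ∑ i, h i) ^ lam⌋₊,
          (dfold lam n : ℝ) * f n)
      (fun _ => c) (Set.Icc 0 (fun _ => h₀)) := by
    intro h hh
    obtain ⟨hh1, hh2⟩ := hh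
    have ht0 : 0 ≤ ∑ i, h i := Finset.sum_nonneg fun i _ => hh1 i
    have ht : ∑ i, h i ≤ ((lam : ℝ) - 1) * h₀ := by
      have : ∑ i, h i ≤ (Finset.univ : Finset (Fin (lam - 1))).card • h₀ :=
        Finset.sum_le_card_nsmul _ _ _ fun i _ => hh2 i
      simpa [Finset.card_univ, nsmul_eq_mul, Nat.cast_sub (by omega : 1 ≤ lam)] using this
    simp only
    rw [floor_stable lam a b h₀ _ ha0 hab.le ht0 ht (lt_of_lt_of_le hβ (min_le_left _ _)),
        floor_stable lam b b h₀ _ hb0 le_rfl ht0 ht (lt_of_lt_of_le hβ (min_le_right _ _))]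
  rw [setIntegral_congr_fun measurableSet_Icc heqon, setIntegral_const, measureReal_def,
      Real.volume_Icc_pi_toReal (show (0 : Fin (lam - 1) → ℝ) ≤ fun _ => h₀ from fun i => hh₀.le)]
  simp only [Pi.zero_apply, sub_zero, Finset.prod_const, Finset.card_univ, Fintype.card_fin,
    smul_eq_mul]
  field_simp
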